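/- Let Q be a finite group acting by automorphisms on a finite group N, and suppose N is the internal direct product of subgroups S_1, ..., S_t (t ≥ 1), i.e. the S_i pairwise commute elementwise, generate N, and the multiplication map S_1 × ... × S_t → N is a bijection. Suppose the action of Q permutes the set {S_1, ..., S_t} transitively, let Q_1 be the stabilizer of S_1 in Q, and let a_1, ..., a_t ∈ Q be a transversal with a_i · S_1 = S_i for each i. Let ψ : S_1 → ℂ be a function invariant under Q_1 (i.e. ψ(g·s) = ψ(s) for all g ∈ Q_1 and s ∈ S_1). Define γ : N → ℂ by γ(x) = ∏_{i=1}^{t} ψ(a_i⁻¹ · x_i), where x = x_1 x_2 ⋯ x_t is the unique decomposition of x with x_i ∈ S_i (note a_i⁻¹ · x_i ∈ S_1). Then γ is Q-invariant: γ(q·x) = γ(x) for all q ∈ Q and x ∈ N. -/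

import Mathlib

open Pointwise

theorem prod_ofFn_single {M : Type*} [Monoid M] :
    ∀ {n : ℕ} (g : Fin n → M) (i : Fin n), (∀ j, j ≠ i → g j = 1) →
      (List.ofFn g).prod = g i := by
  intro n
  induction n with
  | zero => exact fun g i _ => i.elim0
  | succ n ih =>
    intro g i h
    rw [List.ofFn_succ, List.prod_cons]
    rcases Fin.eq_zero_or_eq_succ i with hi | ⟨j, rfl⟩
    · subst hi
      have : (List.ofFn fun k : Fin n => g k.succ).prod = 1 := by
        apply List.prod_eq_one
        intro y hy
        rw [List.mem_ofFn] at hy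
        obtain ⟨k, rfl⟩ := hy
        exact h _ (Fin.succ_ne_zero k)
      rw [this, mul_one]
    · have h0 : g 0 = 1 := h _ (Fin.succ_ne_zero j).symm
      rw [h0, one_mul]
      exact ih _ j fun k hk => h _ (fun hc => hk (Fin.succ_injective _ hc))

theorem prod_ofFn_comp_perm {M : Type*} [Monoid M] {n : ℕ} (b : Fin n → M)
    (hc : ∀ i j, i ≠ j → Commute (b i) (b j)) (e : Equiv.Perm (Fin n)) :
    (List.ofFn (b ∘ e)).prod = (List.ofFn b).prod := by
  have hp : List.Perm (List.ofFn (b ∘ ⇑e)) (List.ofFn b) := by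
    rw [← List.map_ofFn, List.ofFn_eq_map (f := b)]
    apply List.Perm.map
    apply List.perm_of_nodup_nodup_toFinset_eq
    · exact List.nodup_ofFn.mpr e.injective
    · exact List.nodup_finRange n
    · ext k
      simp [List.mem_ofFn, e.surjective.range_eq]
      exact e.surjective k
  apply hp.prod_eq'
  rw [List.pairwise_ofFn]
  intro i j hij
  exact hc _ _ (fun hc' => (e.injective hc' ▸ hij).false)

theorem stmt4 (Q N : Type) [Group Q] [Group N] [Finite Q] [Finite N]
    [MulDistribMulAction Q N]
    (t : ℕ) (ht : 0 < t) (S : Fin t → Subgroup N)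
    -- the `S i` pairwise commute elementwise
    (hcomm : ∀ i j : Fin t, i ≠ j → ∀ x ∈ S i, ∀ y ∈ S j, x * y = y * x)
    -- the `S i` generate `N`
    (hgen : (⨆ i, S i) = ⊤)
    -- the multiplication map `S 0 × ⋯ × S (t-1) → N` is a bijection
    (hbij : Function.Bijective
      (fun f : (∀ i : Fin t, S i) => (List.ofFn fun i => ((f i : N))).prod))
    -- `Q` permutes the subgroups `S i` ...
    (hperm : ∀ (q : Q) (i : Fin t), ∃ j : Fin t, q • S i = S j)
    -- ... transitively
    (htrans : ∀ i j : Fin t, ∃ q : Q, q • S i = S j)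
    -- a transversal `a` with `a i • S 0 = S i`
    (a : Fin t → Q) (ha : ∀ i : Fin t, a i • S ⟨0, ht⟩ = S i)
    -- `ψ` is a function on `S 0` invariant under the stabilizer `Q₁` of `S 0`
    (ψ : N → ℂ)
    (hψ : ∀ q : Q, q • S ⟨0, ht⟩ = S ⟨0, ht⟩ → ∀ s ∈ S ⟨0, ht⟩, ψ (q • s) = ψ s)
    -- `γ (x₁ ⋯ x_t) = ∏ i, ψ ((a i)⁻¹ • x i)`
    (γ : N → ℂ)
    (hγ : ∀ f : (∀ i : Fin t, S i),
      γ ((List.ofFn fun i => ((f i : N))).prod) = ∏ i : Fin t, ψ ((a i)⁻¹ • (f i : N)))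
    (q : Q) (x : N) : γ (q • x) = γ x := by
  obtain ⟨f, hf⟩ := hbij.2 x
  by_cases hS : Function.Injective S
  · choose σ hσ using fun i => hperm q i
    have hσinj : Function.Injective σ := by
      intro i j hij
      apply hS
      have h1 : q • S i = q • S j := by rw [hσ i, hσ j, hij]
      have := congrArg (fun T => q⁻¹ • T) h1
      simpa [inv_smul_smul] using this
    let e : Equiv.Perm (Fin t) := Equiv.ofBijective σ (Finite.injective_iff_bijective.mp hσinj)
    have heσ : ∀ i, e i = σ i := fun i => rfl
    have hmem : ∀ j : Fin t, q • (f (e.symm j) : N) ∈ S j := by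
      intro j
      have h1 : q • S (e.symm j) = S j := by
        have h2 := hσ (e.symm j)
        rwa [show σ (e.symm j) = j from e.apply_symm_apply j] at h2
      rw [← h1]
      exact Subgroup.smul_mem_pointwise_smul _ _ _ (f _).2
    set g : ∀ j : Fin t, S j := fun j => ⟨q • (f (e.symm j) : N), hmem j⟩ with hg
    have hb : ∀ i j, i ≠ j → Commute ((g i : N)) ((g j : N)) :=
      fun i j hij => hcomm i j hij _ (g i).2 _ (g j).2
    have hprod : (List.ofFn fun j => (g j : N)).prod = q • x := by
      have h2 : ((fun j => (g j : N)) ∘ ⇑e) = fun i => q • (f i : N) := by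
        funext i
        show q • (f (e.symm (e i)) : N) = q • (f i : N)
        rw [congrArg (fun k => ((f k : N))) (e.symm_apply_apply i)]
      rw [← prod_ofFn_comp_perm _ hb e, h2, ← hf, List.smul_prod', List.map_ofFn]
      rfl
    rw [← hprod, hγ g, ← hf, hγ f,
      ← Equiv.prod_comp e (fun j => ψ ((a j)⁻¹ • (g j : N)))]
    apply Finset.prod_congr rfl
    intro i _
    have hgi : (g (e i) : N) = q • (f i : N) := by
      show q • (f (e.symm (e i)) : N) = q • (f i : N)
      rw [congrArg (fun k => ((f k : N))) (e.symm_apply_apply i)]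
    rw [hgi]
    have hs : (a i)⁻¹ • (f i : N) ∈ S ⟨0, ht⟩ := by
      have hmem' : (f i : N) ∈ a i • S ⟨0, ht⟩ := by rw [ha i]; exact (f i).2
      exact Subgroup.mem_pointwise_smul_iff_inv_smul_mem.mp hmem'
    have hr : ((a (e i))⁻¹ * q * a i) • S ⟨0, ht⟩ = S ⟨0, ht⟩ := by
      rw [mul_smul, mul_smul, ha i, heσ i, hσ i, ← ha (σ i), inv_smul_smul]
    have hkey := hψ _ hr _ hs
    have harr : ((a (e i))⁻¹ * q * a i) • ((a i)⁻¹ • (f i : N))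
        = (a (e i))⁻¹ • q • (f i : N) := by
      simp [mul_smul, smul_inv_smul]
    rw [harr] at hkey
    exact hkey
  · -- degenerate case: some S i = S j with i ≠ j, so everything is trivial
    simp only [Function.Injective, not_forall] at hS
    obtain ⟨i, j, heq, hij⟩ := hS
    have hbot : S i = ⊥ := by
      rw [eq_bot_iff]
      intro s hs
      have hs' : s ∈ S j := heq ▸ hs
      let f1 : ∀ k, S k := fun k => if h : k = i then ⟨s, by rw [h]; exact hs⟩ else 1
      let f2 : ∀ k, S k := fun k => if h : k = j then ⟨s, by rw [h]; exact hs'⟩ else 1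
      have e1 : (List.ofFn fun k => ((f1 k : N))).prod = s := by
        rw [prod_ofFn_single _ i (by intro k hk; simp [f1, dif_neg hk])]
        simp [f1]
      have e2 : (List.ofFn fun k => ((f2 k : N))).prod = s := by
        rw [prod_ofFn_single _ j (by intro k hk; simp [f2, dif_neg hk])]
        simp [f2]
      have hfe : f1 = f2 := hbij.1 (e1.trans e2.symm)
      have := congrFun hfe i
      simp [f1, f2, dif_neg hij] at this
      simpa using this
    have hall : ∀ k, S k = ⊥ := by
      intro k
      obtain ⟨q', hq'⟩ := htrans i k
      rw [hbot, Subgroup.smul_bot] at hq'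
      exact hq'.symm
    have hone : ∀ n : N, n = 1 := by
      intro n
      have hn : n ∈ (⊤ : Subgroup N) := trivial
      rw [← hgen] at hn
      simp [hall] at hn
      exact hn
    rw [hone (q • x), hone x]
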